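/- Let L(y) = t(1−t)y'' + (1−t)y'. If y = (1−t)ψ with ψ a polynomial of degree n and L(y) = λy, then λ = −(n+1)². -/

import Mathlib

open Polynomial

lemma aux_X_mul_deriv (q : Polynomial ℝ) (n : ℕ) :
    (X * derivative q).coeff n = n * q.coeff n := by
  cases n with
  | zero => simp
  | succ k => rw [coeff_X_mul, coeff_derivative]; push_cast; ring

theorem stmt_17 (n : ℕ) (ψ : Polynomial ℝ) (hψ : ψ ≠ 0) (hdeg : ψ.natDegree = n)
    (lam : ℝ)
    (h : X * (1 - X) * (derivative (derivative ((1 - X) * ψ))) +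
        (1 - X) * derivative ((1 - X) * ψ) = lam • ((1 - X) * ψ)) :
    lam = -((n : ℝ) + 1) ^ 2 := by
  set y : Polynomial ℝ := (1 - X) * ψ with hy
  have e : (1 - X : Polynomial ℝ) = -(X - C 1) := by rw [C_1]; ring
  have hXne : (1 - X : Polynomial ℝ) ≠ 0 := by
    rw [e, neg_ne_zero]
    exact X_sub_C_ne_zero 1
  have hd1 : (1 - X : Polynomial ℝ).natDegree = 1 := by
    rw [e, natDegree_neg, natDegree_X_sub_C]
  have hdy : y.natDegree = n + 1 := by
    rw [hy, natDegree_mul hXne hψ, hd1, hdeg, Nat.add_comm]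
  have hlc1 : (1 - X : Polynomial ℝ).leadingCoeff = -1 := by
    rw [e, leadingCoeff_neg, (monic_X_sub_C (1 : ℝ)).leadingCoeff]
  have hL : y.coeff (n + 1) = -ψ.leadingCoeff := by
    have h1 : y.coeff (n + 1) = y.leadingCoeff := by rw [← hdy, coeff_natDegree]
    rw [h1, hy, leadingCoeff_mul, hlc1, neg_one_mul]
  have hLne : y.coeff (n + 1) ≠ 0 := by
    rw [hL, neg_ne_zero]
    exact leadingCoeff_ne_zero.mpr hψ
  set q : Polynomial ℝ := derivative y with hq
  set p : Polynomial ℝ := derivative q with hp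
  have hy2 : y.coeff (n + 2) = 0 :=
    coeff_eq_zero_of_natDegree_lt (by rw [hdy]; omega)
  have hqn1 : q.coeff (n + 1) = 0 := by
    rw [hq, coeff_derivative, hy2, zero_mul]
  have hqn : q.coeff n = y.coeff (n + 1) * ((n : ℝ) + 1) := by
    rw [hq, coeff_derivative]
  have hpn : p.coeff n = 0 := by
    rw [hp, coeff_derivative, hqn1, zero_mul]
  have key := congrArg (fun r : Polynomial ℝ => r.coeff (n + 1)) h
  rw [show X * (1 - X) * p + (1 - X) * q = (X * p + q) - (X * (X * p) + X * q) by ring] at key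
  rw [coeff_sub, coeff_add, coeff_add, coeff_X_mul, coeff_X_mul, coeff_X_mul,
    aux_X_mul_deriv, hpn, hqn1, hqn, coeff_smul, smul_eq_mul] at key
  have hcalc : lam * y.coeff (n + 1) = (-((n : ℝ) + 1) ^ 2) * y.coeff (n + 1) := by
    rw [← key]; ring
  exact mul_right_cancel₀ hLne hcalc
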